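/- Let G = (V,E) be a connected simple graph with diameter D, maximum degree Δ(G), and mixed metric dimension β_M(G). Then |V| + |E| ≤ D^{β_M(G)} + β_M(G)·(Δ(G) + 1). -/

import Mathlib

open SimpleGraph

/-- Distance from a vertex `w` to an edge `e` (as a `Sym2`). -/
noncomputable def edist {V : Type*} (G : SimpleGraph V) (w : V) (e : Sym2 V) : Nat :=
  Sym2.lift ⟨fun u v => min (G.dist w u) (G.dist w v), fun u v => min_comm _ _⟩ e

/-- `S` is a mixed resolving set: every two distinct elements of `V ∪ E`
are distinguished by the distance to some vertex of `S`. -/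
def MixedResolvingSet {V : Type*} (G : SimpleGraph V) (S : Set V) : Prop :=
  (∀ u v : V, u ≠ v → ∃ w ∈ S, G.dist w u ≠ G.dist w v) ∧
  (∀ e ∈ G.edgeSet, ∀ f ∈ G.edgeSet, e ≠ f → ∃ w ∈ S, edist G w e ≠ edist G w f) ∧
  (∀ u : V, ∀ e ∈ G.edgeSet, ∃ w ∈ S, G.dist w u ≠ edist G w e)

/-- The mixed metric dimension of `G`. -/
noncomputable def mixedDim {V : Type*} (G : SimpleGraph V) : Nat :=
  sInf {n | ∃ S : Set V, MixedResolvingSet G S ∧ S.ncard = n}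

section Aux
variable {V : Type*} (G : SimpleGraph V)

lemma edist_mk (w a b : V) : edist G w s(a,b) = min (G.dist w a) (G.dist w b) := rfl

lemma edist_eq_zero_iff (hG : G.Connected) (w a b : V) :
    edist G w s(a,b) = 0 ↔ w = a ∨ w = b := by
  rw [edist_mk, Nat.min_eq_zero_iff, hG.dist_eq_zero_iff, hG.dist_eq_zero_iff]

lemma univ_mixedResolving (hG : G.Connected) : MixedResolvingSet G Set.univ := by
  refine ⟨fun u v huv => ⟨u, trivial, ?_⟩, ?_, ?_⟩
  · rw [G.dist_self]
    exact fun h => huv ((hG.dist_eq_zero_iff).mp h.symm)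
  · intro e he f hf hef
    induction e with
    | _ a b =>
    induction f with
    | _ c d =>
    rw [mem_edgeSet] at he hf
    -- some endpoint of e is not in f
    have : a ∉ (s(c,d) : Sym2 V) ∨ b ∉ (s(c,d) : Sym2 V) := by
      by_contra h
      push_neg at h
      exact hef ((Sym2.mem_and_mem_iff he.ne).mp ⟨h.1, h.2⟩).symm
    rcases this with h | h
    · refine ⟨a, trivial, ?_⟩
      rw [edist_mk, edist_mk, G.dist_self, Nat.min_eq_zero_iff.2 (Or.inl rfl)]
      intro hz
      rcases Nat.min_eq_zero_iff.mp hz.symm with h0 | h0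
      · exact h (by rw [(hG.dist_eq_zero_iff).mp h0]; exact Sym2.mem_mk_left _ _)
      · exact h (by rw [(hG.dist_eq_zero_iff).mp h0]; exact Sym2.mem_mk_right _ _)
    · refine ⟨b, trivial, ?_⟩
      rw [edist_mk, edist_mk, G.dist_self, Nat.min_eq_zero_iff.2 (Or.inr rfl)]
      intro hz
      rcases Nat.min_eq_zero_iff.mp hz.symm with h0 | h0
      · exact h (by rw [(hG.dist_eq_zero_iff).mp h0]; exact Sym2.mem_mk_left _ _)
      · exact h (by rw [(hG.dist_eq_zero_iff).mp h0]; exact Sym2.mem_mk_right _ _)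
  · intro u e he
    induction e with
    | _ a b =>
    rw [mem_edgeSet] at he
    by_cases hu : u ∈ (s(a,b) : Sym2 V)
    · -- take the other endpoint w; dist w u = 1, edist w e = 0
      obtain rfl | rfl := Sym2.mem_iff.mp hu
      · exact ⟨b, trivial, by
          rw [edist_mk, G.dist_self, Nat.min_eq_zero_iff.2 (Or.inr rfl)]
          exact fun h => he.ne ((hG.dist_eq_zero_iff).mp h).symm⟩
      · exact ⟨a, trivial, by
          rw [edist_mk, G.dist_self, Nat.min_eq_zero_iff.2 (Or.inl rfl)]
          exact fun h => he.ne ((hG.dist_eq_zero_iff).mp h)⟩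
    · refine ⟨u, trivial, ?_⟩
      rw [G.dist_self]
      intro h
      rcases Nat.min_eq_zero_iff.mp (edist_mk G u a b ▸ h.symm) with h0 | h0
      · exact hu (by rw [(hG.dist_eq_zero_iff).mp h0]; exact Sym2.mem_mk_left _ _)
      · exact hu (by rw [(hG.dist_eq_zero_iff).mp h0]; exact Sym2.mem_mk_right _ _)

end Aux

open Classical in
theorem stmt_6 {V : Type*} [Fintype V] [DecidableEq V] (G : SimpleGraph V)
    [DecidableRel G.Adj] (hG : G.Connected) :
    Fintype.card V + G.edgeFinset.card ≤
      G.diam ^ mixedDim G + mixedDim G * (G.maxDegree + 1) := by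
  haveI : Nonempty V := hG.nonempty
  have hediam : G.ediam ≠ ⊤ := by
    obtain ⟨u, v, huv⟩ := G.exists_edist_eq_ediam_of_finite
    rw [← huv]
    exact (edist_ne_top_iff_reachable).mpr (hG.preconnected u v)
  have hdle : ∀ u v : V, G.dist u v ≤ G.diam := fun u v => dist_le_diam hediam
  obtain ⟨S, hS, hScard⟩ :=
    Nat.sInf_mem (⟨Set.univ.ncard, Set.univ, univ_mixedResolving G hG, rfl⟩ :
      {n | ∃ S : Set V, MixedResolvingSet G S ∧ S.ncard = n}.Nonempty)
  set k := mixedDim G with hk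
  set D := G.diam with hD
  haveI : Fintype S := S.toFinite.fintype
  have hSk : Fintype.card S = k := by
    rw [hk, mixedDim, ← hScard, Set.ncard_eq_toFinset_card', Set.toFinset_card]
  -- the combined type
  set α := V ⊕ {e : Sym2 V // e ∈ G.edgeFinset} with hα
  have hcardα : Fintype.card α = Fintype.card V + G.edgeFinset.card := by
    show Fintype.card (V ⊕ {e : Sym2 V // e ∈ G.edgeFinset}) = _
    rw [Fintype.card_sum, Fintype.card_coe]
  -- distance vector
  set F : α → (S → ℕ) := fun x w => match x with
    | .inl u => G.dist w u
    | .inr e => edist G w e.1 with hF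
  have hFle : ∀ x (w : S), F x w ≤ D := by
    rintro (u | ⟨e, he⟩) w
    · exact hdle _ _
    · induction e with
      | _ a b => exact le_trans (min_le_left _ _) (hdle _ _)
  have hFinj : Function.Injective F := by
    rintro (u | e) (v | f) h
    · by_contra hne
      have : u ≠ v := fun h' => hne (by rw [h'])
      obtain ⟨w, hw, hne'⟩ := hS.1 u v this
      exact hne' (congrFun h ⟨w, hw⟩)
    · obtain ⟨w, hw, hne'⟩ := hS.2.2 u f.1 (mem_edgeFinset.mp f.2)
      exact absurd (congrFun h ⟨w, hw⟩) hne'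
    · obtain ⟨w, hw, hne'⟩ := hS.2.2 v e.1 (mem_edgeFinset.mp e.2)
      exact absurd (congrFun h ⟨w, hw⟩).symm hne'
    · by_contra hne
      have : e.1 ≠ f.1 := fun h' => hne (by rw [Subtype.ext h'])
      obtain ⟨w, hw, hne'⟩ := hS.2.1 e.1 (mem_edgeFinset.mp e.2) f.1
        (mem_edgeFinset.mp f.2) this
      exact hne' (congrFun h ⟨w, hw⟩)
  -- split
  set A : Finset α := Finset.univ.filter (fun x => ∀ w : S, 1 ≤ F x w) with hA
  set B : Finset α := Finset.univ.filter (fun x => ¬ ∀ w : S, 1 ≤ F x w) with hB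
  have hsplit : Fintype.card α ≤ A.card + B.card := by
    rw [← Finset.card_univ]
    refine le_trans (Finset.card_le_card ?_) (Finset.card_union_le _ _)
    intro x _
    by_cases hx : ∀ w : S, 1 ≤ F x w
    · exact Finset.mem_union_left _ (Finset.mem_filter.mpr ⟨Finset.mem_univ _, hx⟩)
    · exact Finset.mem_union_right _ (Finset.mem_filter.mpr ⟨Finset.mem_univ _, hx⟩)
  -- bound A
  have hAcard : A.card ≤ D ^ k := by
    have := Finset.card_le_card_of_injOn (s := A) F
      (t := Fintype.piFinset (fun _ : S => Finset.Icc 1 D))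
      (fun x hx => by
        rw [hA] at hx
        have hx' : ∀ w : S, 1 ≤ F x w := (Finset.mem_filter.mp hx).2
        rw [Finset.mem_coe, Fintype.mem_piFinset]
        intro w
        rw [Finset.mem_Icc]
        exact ⟨hx' w, hFle x w⟩)
      (fun x _ y _ h => hFinj h)
    refine le_trans this (le_of_eq ?_)
    rw [Fintype.card_piFinset]
    simp [Nat.card_Icc, hSk]
  -- bound B
  have hBcard : B.card ≤ k * (G.maxDegree + 1) := by
    set Bw : V → Finset α := fun w => Finset.univ.filter (fun x => match x with
      | .inl u => u = w
      | .inr e => w ∈ e.1) with hBw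
    have hsub : B ⊆ S.toFinset.biUnion Bw := by
      intro x hx
      rw [hB] at hx
      have hx' : ¬ ∀ w : S, 1 ≤ F x w := (Finset.mem_filter.mp hx).2
      push_neg at hx'
      obtain ⟨w, hw⟩ := hx'
      have hw0 : F x w = 0 := by omega
      rw [Finset.mem_biUnion]
      refine ⟨w.1, Set.mem_toFinset.mpr w.2, Finset.mem_filter.mpr ⟨Finset.mem_univ _, ?_⟩⟩
      obtain (u | ⟨e, he⟩) := x
      · exact ((hG.dist_eq_zero_iff).mp hw0).symm
      · induction e with
        | _ a b =>
          show w.1 ∈ (s(a,b) : Sym2 V)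
          rcases (edist_eq_zero_iff G hG w.1 a b).mp hw0 with h | h
          · rw [h]; exact Sym2.mem_mk_left _ _
          · rw [h]; exact Sym2.mem_mk_right _ _
    have hBwcard : ∀ w ∈ S.toFinset, (Bw w).card ≤ G.maxDegree + 1 := by
      intro w _
      set φ : α → Sym2 V := fun x => match x with
        | .inl u => s(u,u)
        | .inr e => e.1 with hφ
      have := Finset.card_le_card_of_injOn (s := Bw w) φ
        (t := insert s(w,w) (G.incidenceFinset w))
        (by
          rintro (u | e) hx
          · rw [hBw] at hx
            have hx' : u = w := (Finset.mem_filter.mp hx).2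
            show s(u,u) ∈ _
            rw [hx']
            exact Finset.mem_insert_self _ _
          · rw [hBw] at hx
            have hx' : w ∈ e.1 := (Finset.mem_filter.mp hx).2
            refine Finset.mem_insert_of_mem ?_
            rw [mem_incidenceFinset]
            exact ⟨mem_edgeFinset.mp e.2, hx'⟩)
        (by
          rintro (u | e) hu (v | f) hv h
          · have h' : (s(u,u) : Sym2 V) = s(v,v) := h
            rw [Sym2.eq_iff] at h'
            rcases h' with ⟨h', _⟩ | ⟨h', _⟩ <;> rw [h']
          · exfalso
            have h' : (s(u,u) : Sym2 V) = f.1 := h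
            have : f.1.IsDiag := by rw [← h']; exact Sym2.mk_isDiag_iff.mpr rfl
            exact (G.not_isDiag_of_mem_edgeSet (mem_edgeFinset.mp f.2)) this
          · exfalso
            have h' : e.1 = (s(v,v) : Sym2 V) := h
            have : e.1.IsDiag := by rw [h']; exact Sym2.mk_isDiag_iff.mpr rfl
            exact (G.not_isDiag_of_mem_edgeSet (mem_edgeFinset.mp e.2)) this
          · have h' : e.1 = f.1 := h
            rw [Subtype.ext h'])
      refine le_trans this ?_
      refine le_trans (Finset.card_insert_le _ _) ?_
      rw [G.card_incidenceFinset_eq_degree]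
      have := G.degree_le_maxDegree w
      omega
    calc B.card ≤ (S.toFinset.biUnion Bw).card := Finset.card_le_card hsub
      _ ≤ ∑ w ∈ S.toFinset, (Bw w).card := Finset.card_biUnion_le
      _ ≤ ∑ w ∈ S.toFinset, (G.maxDegree + 1) := Finset.sum_le_sum hBwcard
      _ = S.toFinset.card * (G.maxDegree + 1) := by rw [Finset.sum_const, smul_eq_mul]
      _ = k * (G.maxDegree + 1) := by
          rw [Set.toFinset_card, hSk]
  rw [← hcardα]
  calc Fintype.card α ≤ A.card + B.card := hsplit
    _ ≤ D ^ k + k * (G.maxDegree + 1) := Nat.add_le_add hAcard hBcard
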